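/- Let 0<r<1 and suppose 0 ≤ x ≤ z ≤ 2^{-r}. Then for every real y with y ≥ z^{1/r}, one has (z^{1/r}+y)^r - (x^{1/r}+y)^r ≤ 2^r (z-x). In particular this inequality holds for all y ≥ 1/2. -/

import Mathlib

private lemma tangent_line (r c t : ℝ) (hr0 : 0 < r) (hr1 : r < 1)
    (hc : 0 < c) (ht : 0 ≤ t) : t ^ r ≤ c ^ r + r * c ^ (r - 1) * (t - c) := by
  have hs : (-1 : ℝ) ≤ (t - c) / c := by
    rw [le_div_iff₀ hc]; linarith
  have hB := rpow_one_add_le_one_add_mul_self hs hr0.le hr1.le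
  have h1 : (1 : ℝ) + (t - c) / c = t / c := by field_simp; ring
  rw [h1, Real.div_rpow ht hc.le, div_le_iff₀ (Real.rpow_pos_of_pos hc r)] at hB
  have hcr1 : c ^ (r - 1) = c ^ r / c := by
    rw [Real.rpow_sub hc, Real.rpow_one]
  calc t ^ r ≤ (1 + r * ((t - c) / c)) * c ^ r := hB
    _ = c ^ r + r * c ^ (r - 1) * (t - c) := by rw [hcr1]; field_simp

theorem stmt3 (r x z : ℝ) (hr0 : 0 < r) (hr1 : r < 1)
    (hx : 0 ≤ x) (hxz : x ≤ z) (hz : z ≤ (2 : ℝ) ^ (-r)) :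
    (∀ y : ℝ, z ^ (1 / r) ≤ y →
      (z ^ (1 / r) + y) ^ r - (x ^ (1 / r) + y) ^ r ≤ 2 ^ r * (z - x)) ∧
    (∀ y : ℝ, 1 / 2 ≤ y →
      (z ^ (1 / r) + y) ^ r - (x ^ (1 / r) + y) ^ r ≤ 2 ^ r * (z - x)) := by
  have hrne : r ≠ 0 := hr0.ne'
  have hz0 : 0 ≤ z := hx.trans hxz
  have key : ∀ y : ℝ, z ^ (1 / r) ≤ y →
      (z ^ (1 / r) + y) ^ r - (x ^ (1 / r) + y) ^ r ≤ 2 ^ r * (z - x) := by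
    intro y hy
    rcases eq_or_lt_of_le hz0 with hzz | hzz
    · have hxe : x = 0 := le_antisymm (by rw [hzz]; exact hxz) hx
      rw [← hzz, hxe]
      simp
    set a := x ^ (1 / r) with ha
    set b := z ^ (1 / r) with hb
    have hb0 : 0 < b := Real.rpow_pos_of_pos hzz _
    have ha0 : 0 ≤ a := Real.rpow_nonneg hx _
    have hab : a ≤ b := Real.rpow_le_rpow hx hxz (by positivity)
    have hy0 : 0 < y := lt_of_lt_of_le hb0 hy
    have har : a ^ r = x := by
      rw [ha, one_div, Real.rpow_inv_rpow hx hrne]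
    have hbr : b ^ r = z := by
      rw [hb, one_div, Real.rpow_inv_rpow hz0 hrne]
    -- upper bound on LHS
    have h1 : (b + y) ^ r ≤ (a + y) ^ r + r * (a + y) ^ (r - 1) * (b - a) := by
      have := tangent_line r (a + y) (b + y) hr0 hr1 (by linarith) (by linarith)
      convert this using 2 <;> ring
    -- lower bound on z - x
    have h2 : r * b ^ (r - 1) * (b - a) ≤ z - x := by
      have := tangent_line r b a hr0 hr1 hb0 ha0
      rw [har, hbr] at this
      nlinarith
    -- middle comparison
    have h3 : (a + y) ^ (r - 1) ≤ b ^ (r - 1) :=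
      Real.rpow_le_rpow_of_nonpos hb0 (by linarith) (by linarith)
    have h4 : r * (a + y) ^ (r - 1) * (b - a) ≤ r * b ^ (r - 1) * (b - a) := by
      have hba : 0 ≤ b - a := by linarith
      have := mul_le_mul_of_nonneg_right h3 hba
      nlinarith
    have h5 : (1 : ℝ) ≤ 2 ^ r := Real.one_le_rpow one_le_two hr0.le
    have hzx : 0 ≤ z - x := by linarith
    nlinarith
  refine ⟨key, fun y hy => key y ?_⟩
  have : z ^ (1 / r) ≤ ((2 : ℝ) ^ (-r)) ^ (1 / r) :=
    Real.rpow_le_rpow hz0 hz (by positivity)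
  have h2 : ((2 : ℝ) ^ (-r)) ^ (1 / r) = 1 / 2 := by
    rw [← Real.rpow_mul (by norm_num : (0:ℝ) ≤ 2)]
    rw [show -r * (1 / r) = -1 by field_simp]
    rw [Real.rpow_neg_one]
    norm_num
  linarith
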